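/- Let p ≡ 1 (mod 4) be a prime and let a_1,...,a_{(p-1)/2} be all the quadratic residues modulo p in {1,...,p-1}. Then the determinant of the matrix [(a_i + a_j)^{(p-3)/2}]_{1≤i,j≤(p-1)/2} over F_p is a nonzero square in F_p. -/

import Mathlib

open Matrix Finset

private theorem stmt_10_aux (p : ℕ) [Fact p.Prime] (h4 : p % 4 = 1) (hp5 : 5 ≤ p)
    (m n : ℕ) (hmn : m + 1 = n) (h2n : 2 * n = p - 1)
    (a : Fin n → ZMod p) (ha : Function.Injective a) :
    Matrix.det (Matrix.of fun i j : Fin n => (a i + a j) ^ m) ≠ 0 ∧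
    IsSquare (Matrix.det (Matrix.of fun i j : Fin n => (a i + a j) ^ m)) := by
  subst hmn
  have hp : p.Prime := Fact.out
  have hmp : m < p := by omega
  set V : Matrix (Fin (m + 1)) (Fin (m + 1)) (ZMod p) := Matrix.vandermonde a with hV
  set D : Matrix (Fin (m + 1)) (Fin (m + 1)) (ZMod p) :=
    Matrix.diagonal (fun k : Fin (m + 1) => (m.choose k : ZMod p)) with hD
  set B : Matrix (Fin (m + 1)) (Fin (m + 1)) (ZMod p) :=
    Matrix.of (fun k j : Fin (m + 1) => a j ^ (m - (k : ℕ))) with hB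
  have hM : Matrix.of (fun i j : Fin (m + 1) => (a i + a j) ^ m) = V * D * B := by
    ext i j
    rw [Matrix.mul_apply]
    simp only [Matrix.mul_diagonal, hV, hB, Matrix.vandermonde, Matrix.of_apply]
    rw [add_pow, ← Fin.sum_univ_eq_sum_range
      (fun k => a i ^ k * a j ^ (m - k) * (m.choose k : ZMod p)) (m + 1)]
    refine Finset.sum_congr rfl (fun k _ => ?_)
    rw [hD, Matrix.mul_diagonal]
    simp only [Matrix.of_apply]
    ring
  have hvrev : ∀ k : Fin (m + 1), ((Fin.revPerm k : Fin (m + 1)) : ℕ) = m - (k : ℕ) := by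
    intro k
    simp only [Fin.revPerm_apply, Fin.val_rev]
    omega
  have hBperm : B = Vᵀ.submatrix Fin.revPerm id := by
    ext k j
    simp only [hB, Matrix.of_apply, Matrix.submatrix_apply, Matrix.transpose_apply, hV,
      Matrix.vandermonde, Matrix.of_apply, id]
    rw [hvrev k]
  have hdetB : B.det = ((Equiv.Perm.sign (Fin.revPerm : Equiv.Perm (Fin (m + 1)))) : ℤ) * V.det := by
    rw [hBperm, Matrix.det_permute, Matrix.det_transpose]
  set ε : ZMod p :=
    (((Equiv.Perm.sign (Fin.revPerm : Equiv.Perm (Fin (m + 1)))) : ℤ) : ZMod p) with hε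
  have hεcases : ε = 1 ∨ ε = -1 := by
    rcases Int.units_eq_one_or (Equiv.Perm.sign (Fin.revPerm : Equiv.Perm (Fin (m + 1)))) with
      h | h
    · left; rw [hε, h]; norm_num
    · right; rw [hε, h]; norm_num
  set P : ZMod p := ∏ k : Fin (m + 1), (m.choose k : ZMod p) with hP
  have hchoose_ne : ∀ k : Fin (m + 1), (m.choose k : ZMod p) ≠ 0 := by
    intro k
    rw [Ne, ZMod.natCast_eq_zero_iff]
    intro hdvd
    have hk : (k : ℕ) ≤ m := by have := k.isLt; omega
    have : p ∣ m.factorial := by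
      rw [← Nat.choose_mul_factorial_mul_factorial hk]
      exact (hdvd.mul_right _).mul_right _
    exact absurd ((Nat.Prime.dvd_factorial hp).mp this) (by omega)
  have hPne : P ≠ 0 := Finset.prod_ne_zero_iff.mpr (fun k _ => hchoose_ne k)
  have hdet : (Matrix.of fun i j : Fin (m + 1) => (a i + a j) ^ m).det
      = V.det * P * (ε * V.det) := by
    rw [hM, Matrix.det_mul, Matrix.det_mul, hdetB, hD, Matrix.det_diagonal, ← hP, hε]
  have hdetV : V.det ≠ 0 := (Matrix.det_vandermonde_ne_zero_iff).mpr ha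
  have hεne : ε ≠ 0 := by
    rcases hεcases with h | h <;> rw [h] <;> simp
  have hm1sq : IsSquare (-1 : ZMod p) := (ZMod.exists_sq_eq_neg_one_iff).mpr (by omega)
  have hεsq : IsSquare ε := by
    rcases hεcases with h | h
    · exact h ▸ IsSquare.one
    · exact h ▸ hm1sq
  have hfactne : ∀ k : ℕ, k ≤ m → ((k.factorial : ZMod p) ≠ 0) := by
    intro k hk
    rw [Ne, ZMod.natCast_eq_zero_iff]
    intro hdvd
    exact absurd ((Nat.Prime.dvd_factorial hp).mp hdvd) (by omega)
  have hPsq : IsSquare P := by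
    have hPeq : P = ∏ k : Fin (m + 1), ((m.factorial : ZMod p) *
        (((k : ℕ).factorial : ZMod p)⁻¹ * (((m - (k : ℕ)).factorial : ZMod p))⁻¹)) := by
      refine Finset.prod_congr rfl (fun k _ => ?_)
      have hk : (k : ℕ) ≤ m := by have := k.isLt; omega
      have h1 := hfactne k hk
      have h2 := hfactne (m - k) (by omega)
      field_simp
      rw [← Nat.choose_mul_factorial_mul_factorial hk]
      push_cast
      ring
    have hrev : (∏ k : Fin (m + 1), (((m - (k : ℕ)).factorial : ZMod p))⁻¹)
        = ∏ k : Fin (m + 1), (((k : ℕ).factorial : ZMod p)⁻¹) := by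
      rw [← Equiv.prod_comp (Fin.revPerm : Equiv.Perm (Fin (m + 1)))
        (fun k : Fin (m + 1) => (((k : ℕ).factorial : ZMod p))⁻¹)]
      exact Finset.prod_congr rfl (fun k _ => by rw [hvrev k])
    have hmfne : ((m.factorial : ZMod p)) ≠ 0 := hfactne m le_rfl
    have hsq1 : ((m.factorial : ZMod p) ^ (m + 1)) * ((m.factorial : ZMod p) ^ (m + 1)) = 1 := by
      rw [← pow_add]
      have : m + 1 + (m + 1) = p - 1 := by omega
      rw [this, ZMod.pow_card_sub_one_eq_one hmfne]
    have h1 : (m.factorial : ZMod p) ^ (m + 1) = 1 ∨ (m.factorial : ZMod p) ^ (m + 1) = -1 :=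
      mul_self_eq_one_iff.mp hsq1
    have hsqA : IsSquare ((m.factorial : ZMod p) ^ (m + 1)) := by
      rcases h1 with h | h
      · exact h ▸ IsSquare.one
      · exact h ▸ hm1sq
    rw [hPeq, Finset.prod_mul_distrib, Finset.prod_mul_distrib, hrev, Finset.prod_const,
      Finset.card_univ, Fintype.card_fin, ← sq]
    exact hsqA.mul (IsSquare.sq _)
  refine ⟨?_, ?_⟩
  · rw [hdet]
    exact mul_ne_zero (mul_ne_zero hdetV hPne) (mul_ne_zero hεne hdetV)
  · rw [hdet]
    have : V.det * P * (ε * V.det) = (ε * P) * V.det ^ 2 := by ring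
    rw [this]
    exact (hεsq.mul hPsq).mul (IsSquare.sq _)

theorem stmt_10 (p : ℕ) [Fact p.Prime] (h4 : p % 4 = 1)
    (a : Fin ((p - 1) / 2) → ZMod p) (ha : Function.Injective a)
    (hsq : ∀ x : ZMod p, (∃ i, a i = x) ↔ x ≠ 0 ∧ ∃ y : ZMod p, y ^ 2 = x) :
    Matrix.det (Matrix.of fun i j : Fin ((p - 1) / 2) => (a i + a j) ^ ((p - 3) / 2)) ≠ 0 ∧
    IsSquare (Matrix.det (Matrix.of fun i j : Fin ((p - 1) / 2) =>
      (a i + a j) ^ ((p - 3) / 2))) := by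
  have hp : p.Prime := Fact.out
  have hp5 : 5 ≤ p := by have := hp.two_le; omega
  exact stmt_10_aux p h4 hp5 ((p - 3) / 2) ((p - 1) / 2) (by omega) (by omega) a ha
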